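/- Let m ≥ 1 and k ≥ 2. Let f : ℝ^m → ℂ be continuous with f(0) = 0 and admit a second-order Taylor expansion at the origin, with coefficients ℓ₀ ∈ ℂ^m and symmetric A₀ ∈ ℂ^{m×m} (constant term 0). Let o be a nontrivial real orthogonal k×k matrix, and suppose that for all r₁, …, r_k ∈ ℝ^m one has ∏_{j=1}^k exp(f(Σ_{l=1}^k o_{lj} r_l)) = ∏_{j=1}^k exp(f(r_j)). Then f is a quadratic polynomial: f(r) = ℓ₀ᵀ r + rᵀ A₀ r for all r ∈ ℝ^m. If moreover o is not stochastic, then ℓ₀ = 0, i.e. f is a homogeneous quadratic form. -/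

import Mathlib

open scoped BigOperators

theorem aux_sum_eq
    (m k : ℕ)
    (f : (Fin m → ℝ) → ℂ) (hcont : Continuous f) (hf0 : f 0 = 0)
    (o : Matrix (Fin k) (Fin k) ℝ)
    (hfun : ∀ r : Fin k → (Fin m → ℝ),
      ∏ j, Complex.exp (f (∑ l, o l j • r l)) = ∏ j, Complex.exp (f (r j))) :
    ∀ r : Fin k → (Fin m → ℝ),
      ∑ j, f (∑ l, o l j • r l) = ∑ j, f (r j) := by
  set F : (Fin k → Fin m → ℝ) → ℂ :=
    fun r => (∑ j, f (∑ l, o l j • r l)) - ∑ j, f (r j) with hF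
  have hFc : Continuous F := by
    apply Continuous.sub
    · apply continuous_finset_sum
      intro j _
      exact hcont.comp (continuous_finset_sum _ fun l _ => by fun_prop)
    · exact continuous_finset_sum _ fun j _ => hcont.comp (continuous_apply j)
  have hexp : ∀ r, Complex.exp (F r) = 1 := by
    intro r
    rw [hF]
    simp only
    rw [Complex.exp_sub, Complex.exp_sum, Complex.exp_sum, hfun, div_self]
    exact Finset.prod_ne_zero_iff.mpr fun j _ => Complex.exp_ne_zero _
  have hF0 : F 0 = 0 := by
    simp [hF, hf0]
  have hsub : F ⁻¹' {0} = F ⁻¹' (Metric.ball 0 1) := by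
    ext r
    simp only [Set.mem_preimage, Set.mem_singleton_iff, Metric.mem_ball, dist_zero_right]
    constructor
    · intro h; rw [h]; simpa using one_pos
    · intro h
      obtain ⟨n, hn⟩ := Complex.exp_eq_one_iff.mp (hexp r)
      rcases eq_or_ne n 0 with h0 | h0
      · simpa [h0] using hn
      · exfalso
        rw [hn] at h
        have h2 : ‖(n : ℂ) * (2 * Real.pi * Complex.I)‖ =
            |(n : ℝ)| * (2 * Real.pi) := by
          simp [abs_of_pos Real.pi_pos, mul_comm]
        have h3 : (1:ℝ) ≤ |(n:ℝ)| := by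
          rw [← Int.cast_abs]
          exact_mod_cast Int.one_le_abs h0
        have h4 : (1:ℝ) < |(n:ℝ)| * (2 * Real.pi) := by
          nlinarith [Real.pi_gt_three]
        rw [h2] at h
        linarith
  have hclopen : IsClopen (F ⁻¹' {0}) := by
    constructor
    · exact isClosed_singleton.preimage hFc
    · rw [hsub]; exact Metric.isOpen_ball.preimage hFc
  have := isClopen_iff.mp hclopen
  rcases this with h | h
  · exfalso
    have : (0 : Fin k → Fin m → ℝ) ∈ F ⁻¹' {0} := hF0
    rw [h] at this; exact this
  · intro r
    have : r ∈ F ⁻¹' {0} := by rw [h]; trivial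
    have : F r = 0 := this
    simp only [hF] at this
    exact sub_eq_zero.mp this

theorem aux_trace (m k : ℕ) (A₀ : Matrix (Fin m) (Fin m) ℂ)
    (S : Matrix (Fin k) (Fin m) ℂ) :
    ∑ j, ∑ i, ∑ i', S j i * A₀ i i' * S j i' = Matrix.trace (S * A₀ * S.transpose) := by
  simp only [Matrix.trace, Matrix.diag, Matrix.mul_apply, Matrix.transpose_apply,
    Finset.sum_mul, Finset.mul_sum]
  apply Finset.sum_congr rfl; intro j _
  rw [Finset.sum_comm]

theorem aux_quad (m k : ℕ) (A₀ : Matrix (Fin m) (Fin m) ℂ)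
    (o : Matrix (Fin k) (Fin k) ℝ) (ho' : o * o.transpose = 1)
    (r : Fin k → Fin m → ℝ) :
    (∑ j, ∑ i, ∑ i', (((∑ l, o l j • r l) i : ℝ) : ℂ) * A₀ i i' * (((∑ l, o l j • r l) i' : ℝ) : ℂ))
      = ∑ j, ∑ i, ∑ i', ((r j i : ℝ) : ℂ) * A₀ i i' * ((r j i' : ℝ) : ℂ) := by
  set oc : Matrix (Fin k) (Fin k) ℂ := o.map Complex.ofReal with hoc
  set R : Matrix (Fin k) (Fin m) ℂ := (fun l i => (r l i : ℂ)) with hR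
  have hoc1 : oc * oc.transpose = 1 := by
    rw [hoc, ← Matrix.transpose_map]
    have : (o.map Complex.ofReal) * (o.transpose.map Complex.ofReal)
        = (o * o.transpose).map Complex.ofReal := by
      ext a b
      simp [Matrix.mul_apply, Matrix.map_apply]
    rw [this, ho']
    ext a b
    simp [Matrix.map_apply, Matrix.one_apply]
    split <;> simp
  have hS : ∀ j i, (((∑ l, o l j • r l) i : ℝ) : ℂ) = (oc.transpose * R) j i := by
    intro j i
    rw [Matrix.mul_apply]
    rw [Finset.sum_apply]
    push_cast
    apply Finset.sum_congr rfl; intro l _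
    simp [hoc, hR, Matrix.map_apply, Matrix.transpose_apply]
  simp_rw [hS]
  rw [aux_trace, show (∑ j, ∑ i, ∑ i', ((r j i : ℝ) : ℂ) * A₀ i i' * ((r j i' : ℝ) : ℂ)) = ∑ j, ∑ i, ∑ i', R j i * A₀ i i' * R j i' from rfl, aux_trace]
  have h1 : (oc.transpose * R) * A₀ * (oc.transpose * R).transpose
      = oc.transpose * (R * A₀ * R.transpose * oc) := by
    rw [Matrix.transpose_mul, Matrix.transpose_transpose]
    simp only [Matrix.mul_assoc]
  rw [h1, Matrix.trace_mul_comm, Matrix.mul_assoc (R * A₀ * R.transpose), hoc1, Matrix.mul_one]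

theorem aux_glimit (m : ℕ) (g : (Fin m → ℝ) → ℂ) (hg0 : g 0 = 0)
    (hg : Filter.Tendsto (fun r : Fin m → ℝ => g r / ((∑ i, (r i) ^ 2 : ℝ) : ℂ))
      (nhdsWithin 0 {0}ᶜ) (nhds 0)) (v : Fin m → ℝ) :
    Filter.Tendsto (fun t : ℝ => g (t • v) / (t : ℂ)) (nhdsWithin 0 {0}ᶜ) (nhds 0) := by
  rcases eq_or_ne v 0 with rfl | hv
  · have : (fun t : ℝ => g (t • (0 : Fin m → ℝ)) / (t : ℂ)) = fun _ => 0 := by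
      funext t; simp [hg0]
    rw [this]; exact tendsto_const_nhds
  · have hT : (0:ℝ) < ∑ i, (v i)^2 := by
      have h1 : ∃ i, v i ≠ 0 := by
        by_contra h; push_neg at h; exact hv (funext h)
      obtain ⟨i, hi⟩ := h1
      have h2 : (0:ℝ) < (v i)^2 := (sq_nonneg _).lt_of_ne (Ne.symm (pow_ne_zero 2 hi))
      exact lt_of_lt_of_le h2 (Finset.single_le_sum (fun i _ => sq_nonneg (v i)) (Finset.mem_univ i))
    have hmap : Filter.Tendsto (fun t : ℝ => t • v) (nhdsWithin 0 {0}ᶜ)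
        (nhdsWithin (0 : Fin m → ℝ) {0}ᶜ) := by
      rw [tendsto_nhdsWithin_iff]
      constructor
      · have : Continuous fun t : ℝ => t • v := by continuity
        simpa using (this.tendsto 0).mono_left nhdsWithin_le_nhds
      · filter_upwards [eventually_mem_nhdsWithin] with t ht
        simp only [Set.mem_compl_iff, Set.mem_singleton_iff] at ht ⊢
        exact smul_ne_zero ht hv
    have h1 := hg.comp hmap
    have h2 : Filter.Tendsto (fun t : ℝ => ((t * ∑ i, (v i)^2 : ℝ) : ℂ))
        (nhdsWithin 0 {0}ᶜ) (nhds 0) := by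
      have hc : Continuous fun t : ℝ => ((t * ∑ i, (v i)^2 : ℝ) : ℂ) := by continuity
      have h := (hc.tendsto 0).mono_left (nhdsWithin_le_nhds (s := ({0}ᶜ : Set ℝ)))
      simpa using h
    have h3 := h1.mul h2
    rw [mul_zero] at h3
    apply h3.congr'
    filter_upwards [eventually_mem_nhdsWithin] with t ht
    simp only [Set.mem_compl_iff, Set.mem_singleton_iff] at ht
    have hsum : ∑ i, ((t • v) i)^2 = t^2 * ∑ i, (v i)^2 := by
      simp [mul_pow, Finset.mul_sum, smul_eq_mul]
    simp only [Function.comp]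
    rw [hsum]
    have htc : (t:ℂ) ≠ 0 := by exact_mod_cast ht
    have hTc : (∑ x : Fin m, ((v x : ℝ):ℂ)^2) ≠ 0 := by
      have h : ((∑ i, (v i)^2 : ℝ) : ℂ) ≠ 0 := by exact_mod_cast hT.ne'
      push_cast at h; exact h
    push_cast
    field_simp

theorem sum3_comm {A B C M : Type*} [Fintype A] [Fintype B] [Fintype C]
    [AddCommMonoid M] (f : A → B → C → M) :
    ∑ a, ∑ b, ∑ c, f a b c = ∑ c, ∑ b, ∑ a, f a b c :=
  calc ∑ a, ∑ b, ∑ c, f a b c = ∑ a, ∑ c, ∑ b, f a b c :=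
        Finset.sum_congr rfl (fun _ _ => Finset.sum_comm)
    _ = ∑ c, ∑ a, ∑ b, f a b c := Finset.sum_comm
    _ = ∑ c, ∑ b, ∑ a, f a b c := Finset.sum_congr rfl (fun _ _ => Finset.sum_comm)

theorem aux_lin (m k : ℕ) (ℓ₀ : Fin m → ℂ) (o : Matrix (Fin k) (Fin k) ℝ)
    (r : Fin k → Fin m → ℝ) :
    ∑ j, ∑ i, ℓ₀ i * (((∑ l, o l j • r l) i : ℝ) : ℂ)
      = ∑ l, ((∑ j, o l j : ℝ) : ℂ) * ∑ i, ℓ₀ i * ((r l i : ℝ) : ℂ) := by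
  have expand : ∀ j i, (((∑ l, o l j • r l) i : ℝ) : ℂ) = ∑ l, ((o l j : ℝ):ℂ) * ((r l i : ℝ):ℂ) := by
    intro j i
    rw [Finset.sum_apply]
    simp only [Pi.smul_apply, smul_eq_mul]
    push_cast
    rfl
  have hrhs : ∑ l, ((∑ j, o l j : ℝ) : ℂ) * ∑ i, ℓ₀ i * ((r l i : ℝ) : ℂ)
      = ∑ l, ∑ j, ∑ i, ((o l j : ℝ):ℂ) * (ℓ₀ i * ((r l i:ℝ):ℂ)) := by
    apply Finset.sum_congr rfl; intro l _
    push_cast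
    rw [Finset.sum_mul]
    apply Finset.sum_congr rfl; intro j _
    rw [Finset.mul_sum]
  rw [hrhs]
  simp_rw [expand, Finset.mul_sum]
  rw [sum3_comm]
  apply Finset.sum_congr rfl; intro l _
  rw [Finset.sum_comm]
  apply Finset.sum_congr rfl; intro j _
  apply Finset.sum_congr rfl; intro i _
  ring

/-- characteristic-function form of the rotation-invariance
characterization. If a continuous `f : ℝᵐ → ℂ` with `f 0 = 0` admits a second-order
Taylor expansion at the origin (constant term `0`, coefficients `ℓ₀`, symmetric `A₀`),
`o` is a nontrivial real orthogonal `k × k` matrix, and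
`∏ⱼ exp(f(Σₗ o_{lj} rₗ)) = ∏ⱼ exp(f(rⱼ))` for all `r₁, …, r_k ∈ ℝᵐ`, then `f` is the
quadratic polynomial given by its Taylor coefficients; if moreover `o` is not
stochastic then `ℓ₀ = 0`. -/
theorem quadratic_of_rotation_invariance_exp
    (m k : ℕ) (hm : 1 ≤ m) (hk : 2 ≤ k)
    (f : (Fin m → ℝ) → ℂ) (hcont : Continuous f) (hf0 : f 0 = 0)
    (ℓ₀ : Fin m → ℂ) (A₀ : Matrix (Fin m) (Fin m) ℂ) (hA₀ : A₀.IsSymm)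
    (g : (Fin m → ℝ) → ℂ)
    (hTaylor : ∀ r : Fin m → ℝ,
      f r = (∑ i, ℓ₀ i * (r i : ℂ))
        + (∑ i, ∑ j, (r i : ℂ) * A₀ i j * (r j : ℂ)) + g r)
    (hg : Filter.Tendsto (fun r : Fin m → ℝ => g r / ((∑ i, (r i) ^ 2 : ℝ) : ℂ))
      (nhdsWithin 0 {0}ᶜ) (nhds 0))
    (o : Matrix (Fin k) (Fin k) ℝ) (ho : o.transpose * o = 1)
    (hnontrivial : ¬ ∀ l j, o l j = 0 ∨ o l j = 1 ∨ o l j = -1)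
    (hfun : ∀ r : Fin k → (Fin m → ℝ),
      ∏ j, Complex.exp (f (∑ l, o l j • r l)) = ∏ j, Complex.exp (f (r j))) :
    (∀ r : Fin m → ℝ,
      f r = (∑ i, ℓ₀ i * (r i : ℂ))
        + (∑ i, ∑ j, (r i : ℂ) * A₀ i j * (r j : ℂ)))
    ∧ (o.mulVec (fun _ => 1) ≠ (fun _ => 1) → ℓ₀ = 0) := by
  classical
  have ho' : o * o.transpose = 1 := mul_eq_one_comm.mp ho
  have Hsum := aux_sum_eq m k f hcont hf0 o hfun
  have hg0 : g 0 = 0 := by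
    have h := hTaylor 0
    simp [hf0] at h
    exact h.symm
  have Hkey : ∀ r : Fin k → Fin m → ℝ,
      (∑ j, g (∑ l, o l j • r l)) - ∑ j, g (r j)
        = ∑ l, ((1:ℂ) - ((∑ j, o l j : ℝ) : ℂ)) * ∑ i, ℓ₀ i * ((r l i : ℝ) : ℂ) := by
    intro r
    have h := Hsum r
    simp_rw [hTaylor] at h
    simp only [Finset.sum_add_distrib] at h
    rw [aux_quad m k A₀ o ho' r, aux_lin m k ℓ₀ o r] at h
    have hsplit : ∑ l, ((1:ℂ) - ((∑ j, o l j : ℝ) : ℂ)) * ∑ i, ℓ₀ i * ((r l i : ℝ) : ℂ)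
        = (∑ l, ∑ i, ℓ₀ i * ((r l i : ℝ) : ℂ))
          - ∑ l, ((∑ j, o l j : ℝ) : ℂ) * ∑ i, ℓ₀ i * ((r l i : ℝ) : ℂ) := by
      rw [← Finset.sum_sub_distrib]
      apply Finset.sum_congr rfl; intro l _
      ring
    rw [hsplit]
    linear_combination h
  have hLsmul : ∀ (v : Fin m → ℝ) (t : ℝ),
      (∑ i, ℓ₀ i * (((t • v) i : ℝ) : ℂ)) = (t : ℂ) * ∑ i, ℓ₀ i * ((v i : ℝ) : ℂ) := by
    intro v t
    rw [Finset.mul_sum]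
    apply Finset.sum_congr rfl; intro i _
    simp only [Pi.smul_apply, smul_eq_mul]
    push_cast
    ring
  have Czero : ∀ r : Fin k → Fin m → ℝ,
      ∑ l, ((1:ℂ) - ((∑ j, o l j : ℝ) : ℂ)) * ∑ i, ℓ₀ i * ((r l i : ℝ) : ℂ) = 0 := by
    intro r
    set C : ℂ := ∑ l, ((1:ℂ) - ((∑ j, o l j : ℝ) : ℂ)) * ∑ i, ℓ₀ i * ((r l i : ℝ) : ℂ) with hC
    have hscale : ∀ t : ℝ,
        (∑ j, g (t • (∑ l, o l j • r l))) - ∑ j, g (t • r j) = (t : ℂ) * C := by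
      intro t
      have h := Hkey (fun l => t • r l)
      have harg : ∀ j, (∑ l, o l j • (t • r l)) = t • ∑ l, o l j • r l := by
        intro j
        rw [Finset.smul_sum]
        apply Finset.sum_congr rfl; intro l _
        rw [smul_comm]
      simp_rw [harg] at h
      rw [h, hC, Finset.mul_sum]
      apply Finset.sum_congr rfl; intro l _
      rw [hLsmul]
      ring
    have hlim : Filter.Tendsto
        (fun t : ℝ => (∑ j, g (t • (∑ l, o l j • r l)) / (t : ℂ)) - ∑ j, g (t • r j) / (t : ℂ))
        (nhdsWithin 0 {0}ᶜ) (nhds 0) := by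
      have h1 := tendsto_finset_sum Finset.univ
        (fun (j : Fin k) (_ : j ∈ Finset.univ) => aux_glimit m g hg0 hg (∑ l, o l j • r l))
      have h2 := tendsto_finset_sum Finset.univ
        (fun (j : Fin k) (_ : j ∈ Finset.univ) => aux_glimit m g hg0 hg (r j))
      simpa using h1.sub h2
    have hconst : Filter.Tendsto (fun _ : ℝ => C) (nhdsWithin (0:ℝ) {0}ᶜ) (nhds 0) := by
      apply hlim.congr'
      filter_upwards [eventually_mem_nhdsWithin] with t ht
      simp only [Set.mem_compl_iff, Set.mem_singleton_iff] at ht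
      have htc : (t : ℂ) ≠ 0 := by exact_mod_cast ht
      rw [← Finset.sum_div, ← Finset.sum_div, ← sub_div, hscale t, mul_comm, mul_div_assoc,
        div_self htc, mul_one]
    exact tendsto_nhds_unique tendsto_const_nhds hconst
  have ginv : ∀ r : Fin k → Fin m → ℝ,
      ∑ j, g (∑ l, o l j • r l) = ∑ j, g (r j) := by
    intro r
    have h := Hkey r
    rw [Czero r] at h
    exact sub_eq_zero.mp h
  push_neg at hnontrivial
  obtain ⟨l₀, j₀, ha0, ha1, ham1⟩ := hnontrivial
  have hrow : ∀ s : Fin m → ℝ, ∑ j, g (o l₀ j • s) = g s := by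
    intro s
    have h := ginv (Pi.single l₀ s)
    have harg : ∀ j, (∑ l, o l j • Pi.single l₀ s l) = o l₀ j • s := by
      intro j
      rw [Finset.sum_eq_single l₀]
      · rw [Pi.single_eq_same]
      · intro l _ hl; rw [Pi.single_eq_of_ne hl, smul_zero]
      · intro h'; exact absurd (Finset.mem_univ _) h'
    simp_rw [harg] at h
    rw [h, Finset.sum_eq_single l₀]
    · rw [Pi.single_eq_same]
    · intro l _ hl; rw [Pi.single_eq_of_ne hl, hg0]
    · intro h'; exact absurd (Finset.mem_univ _) h'
  have hb2 : ∑ j, (o l₀ j)^2 = 1 := by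
    have h := congrArg (fun M => M l₀ l₀) ho'
    simpa [Matrix.mul_apply, Matrix.transpose_apply, Matrix.one_apply, sq] using h
  set B : ℝ := max ((o l₀ j₀)^2) (1 - (o l₀ j₀)^2) with hBdef
  have hbB : ∀ j, (o l₀ j)^2 ≤ B := by
    intro j
    rcases eq_or_ne j j₀ with rfl | hj
    · exact le_max_left _ _
    · have hsub : ({j, j₀} : Finset (Fin k)) ⊆ Finset.univ := Finset.subset_univ _
      have hpair := Finset.sum_le_sum_of_subset_of_nonneg hsub
        (fun j' _ _ => sq_nonneg (o l₀ j'))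
      rw [Finset.sum_pair hj, hb2] at hpair
      have h2 : (o l₀ j)^2 ≤ 1 - (o l₀ j₀)^2 := by linarith
      exact le_trans h2 (le_max_right _ _)
  have ha2le : (o l₀ j₀)^2 ≤ 1 := by
    have h := Finset.single_le_sum (f := fun j => (o l₀ j)^2)
      (fun j _ => sq_nonneg _) (Finset.mem_univ j₀)
    rw [hb2] at h
    exact h
  have hB1 : B < 1 := by
    have ha2lt : (o l₀ j₀)^2 < 1 := by
      rcases lt_or_eq_of_le ha2le with h | h
      · exact h
      · exfalso
        have h' : o l₀ j₀ * o l₀ j₀ = 1 := by rw [← sq]; exact h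
        rcases mul_self_eq_one_iff.mp h' with h'' | h''
        · exact ha1 h''
        · exact ham1 h''
    have hpos : 0 < (o l₀ j₀)^2 := (sq_nonneg _).lt_of_ne (Ne.symm (pow_ne_zero 2 ha0))
    exact max_lt ha2lt (by linarith)
  have hB0 : 0 ≤ B := le_trans (sq_nonneg _) (le_max_left _ _)
  have hbound : ∀ ε : ℝ, 0 < ε → ∀ s : Fin m → ℝ, ‖g s‖ ≤ ε * ∑ i, (s i)^2 := by
    intro ε hε
    obtain ⟨δ, hδ, hδ'⟩ := Metric.tendsto_nhdsWithin_nhds.mp hg ε hε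
    have base : ∀ s : Fin m → ℝ, (∑ i, (s i)^2) < δ^2 → ‖g s‖ ≤ ε * ∑ i, (s i)^2 := by
      intro s hs
      rcases eq_or_ne s 0 with rfl | hs0
      · simp [hg0]
      · have hT : 0 < ∑ i, (s i)^2 := by
          have h1 : ∃ i, s i ≠ 0 := by
            by_contra hcon; push_neg at hcon; exact hs0 (funext hcon)
          obtain ⟨i, hi⟩ := h1
          have h2 : (0:ℝ) < (s i)^2 := (sq_nonneg _).lt_of_ne (Ne.symm (pow_ne_zero 2 hi))
          exact lt_of_lt_of_le h2
            (Finset.single_le_sum (fun i _ => sq_nonneg (s i)) (Finset.mem_univ i))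
        have hnorm : dist s 0 < δ := by
          rw [dist_zero_right]
          have hle : ‖s‖ ≤ Real.sqrt (∑ i, (s i)^2) := by
            rw [pi_norm_le_iff_of_nonneg (Real.sqrt_nonneg _)]
            intro i
            rw [Real.norm_eq_abs, ← Real.sqrt_sq_eq_abs]
            exact Real.sqrt_le_sqrt
              (Finset.single_le_sum (fun i _ => sq_nonneg (s i)) (Finset.mem_univ i))
          have h2 : Real.sqrt (∑ i, (s i)^2) < δ := by
            rw [show δ = Real.sqrt (δ^2) by rw [Real.sqrt_sq hδ.le]]
            exact Real.sqrt_lt_sqrt (Finset.sum_nonneg fun i _ => sq_nonneg _) hs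
          linarith
        have hd := hδ' (by simpa using hs0) hnorm
        rw [dist_zero_right, norm_div] at hd
        have hSig : ‖((∑ i, (s i)^2 : ℝ) : ℂ)‖ = ∑ i, (s i)^2 := by
          rw [Complex.norm_real, Real.norm_eq_abs, abs_of_pos hT]
        rw [hSig] at hd
        exact le_of_lt ((div_lt_iff₀ hT).mp hd)
    have ind : ∀ n : ℕ, ∀ s : Fin m → ℝ,
        (∑ i, (s i)^2) * B^n < δ^2 → ‖g s‖ ≤ ε * ∑ i, (s i)^2 := by
      intro n
      induction n with
      | zero => intro s hs; exact base s (by simpa using hs)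
      | succ n ih =>
        intro s hs
        have hT0 : 0 ≤ ∑ i, (s i)^2 := Finset.sum_nonneg fun i _ => sq_nonneg _
        rw [← hrow s]
        calc ‖∑ j, g (o l₀ j • s)‖ ≤ ∑ j, ‖g (o l₀ j • s)‖ := norm_sum_le _ _
          _ ≤ ∑ j, ε * ((o l₀ j)^2 * ∑ i, (s i)^2) := by
              apply Finset.sum_le_sum; intro j _
              have hsq : ∑ i, ((o l₀ j • s) i)^2 = (o l₀ j)^2 * ∑ i, (s i)^2 := by
                rw [Finset.mul_sum]
                apply Finset.sum_congr rfl; intro i _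
                simp only [Pi.smul_apply, smul_eq_mul]
                ring
              have happ := ih (o l₀ j • s) (by
                rw [hsq]
                have hstep : (o l₀ j)^2 * (∑ i, (s i)^2) * B^n ≤ B * (∑ i, (s i)^2) * B^n :=
                  mul_le_mul_of_nonneg_right
                    (mul_le_mul_of_nonneg_right (hbB j) hT0) (pow_nonneg hB0 n)
                calc (o l₀ j)^2 * (∑ i, (s i)^2) * B^n
                    ≤ B * (∑ i, (s i)^2) * B^n := hstep
                  _ = (∑ i, (s i)^2) * B^(n+1) := by ring
                  _ < δ^2 := hs)
              rw [hsq] at happ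
              exact happ
          _ = ε * ((∑ j, (o l₀ j)^2) * ∑ i, (s i)^2) := by
              rw [← Finset.mul_sum, ← Finset.sum_mul]
          _ = ε * ∑ i, (s i)^2 := by rw [hb2, one_mul]
    intro s
    obtain ⟨n, hn⟩ : ∃ n, (∑ i, (s i)^2) * B^n < δ^2 := by
      have h := tendsto_pow_atTop_nhds_zero_of_lt_one hB0 hB1
      have h2 := h.const_mul (∑ i, (s i)^2)
      rw [mul_zero] at h2
      exact (h2.eventually (gt_mem_nhds (by positivity : (0:ℝ) < δ^2))).exists
    exact ind n s hn
  have gzero : ∀ s, g s = 0 := by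
    intro s
    have hT0 : 0 ≤ ∑ i, (s i)^2 := Finset.sum_nonneg fun i _ => sq_nonneg _
    have h : ‖g s‖ ≤ 0 := by
      apply le_of_forall_pos_le_add
      intro ε hε
      have hTpos : (0:ℝ) < (∑ i, (s i)^2) + 1 := by linarith
      have hb := hbound (ε / ((∑ i, (s i)^2) + 1)) (div_pos hε hTpos) s
      have h5 : ε / ((∑ i, (s i)^2) + 1) * (∑ i, (s i)^2) ≤ ε := by
        rw [div_mul_eq_mul_div, div_le_iff₀ hTpos]
        nlinarith
      linarith
    have := le_antisymm h (norm_nonneg _)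
    exact norm_eq_zero.mp this
  constructor
  · intro r
    rw [hTaylor r, gzero r, add_zero]
  · intro hns
    have hexists : ∃ l, (∑ j, o l j) ≠ 1 := by
      by_contra hcon
      push_neg at hcon
      apply hns
      funext l
      simp [Matrix.mulVec, dotProduct, hcon l]
    obtain ⟨l₁, hl₁⟩ := hexists
    have hL0 : ∀ v : Fin m → ℝ, ∑ i, ℓ₀ i * ((v i : ℝ) : ℂ) = 0 := by
      intro v
      have h := Czero (Pi.single l₁ v)
      rw [Finset.sum_eq_single l₁] at h
      · rw [Pi.single_eq_same] at h
        have hc : ((∑ j, o l₁ j : ℝ) : ℂ) ≠ 1 := by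
          intro hcon; apply hl₁; exact_mod_cast hcon
        have hne : (1:ℂ) - ((∑ j, o l₁ j : ℝ) : ℂ) ≠ 0 := sub_ne_zero.mpr (Ne.symm hc)
        exact (mul_eq_zero.mp h).resolve_left hne
      · intro l _ hl
        rw [Pi.single_eq_of_ne hl]
        simp
      · intro h'; exact absurd (Finset.mem_univ _) h'
    funext i
    have h := hL0 (Pi.single i 1)
    simp only [Pi.single_apply] at h
    rw [Finset.sum_eq_single i] at h
    · simpa using h
    · intro i' _ hi'
      simp [hi']
    · intro h'; exact absurd (Finset.mem_univ _) h'
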